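/- Let (R, m) be a local ring with residue field K and let K ⊂ L be a field extension. Fix a coefficient field-compatible structure: for each i let R_i = R/m^i with a ring map ι_i: K → R_i splitting the residue map, compatibly in i. Then the natural map lim_i (R_i ⊗_K L) ≅ (lim_i R_i) ⊗̂_K L is an isomorphism of topological rings, where ⊗̂ denotes the completed tensor product (the coproduct in the category of topological rings with the inverse limit topologies), and each R_i ⊗_K L is a local ring with residue field L and nilpotent maximal ideal. -/

import Mathlib

open IsLocalRing TensorProduct

set_option maxHeartbeats 1000000
set_option synthInstance.maxHeartbeats 400000

section

variable (K L : Type u) [Field K] [Field L] [Algebra K L]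
  (A : ℕ → Type u) [∀ i, CommRing (A i)] [∀ i, Algebra K (A i)]
  (T : ∀ i, A (i + 1) →ₐ[K] A i)

/-- The inverse limit `lim_i A i` of an `ℕ`-indexed inverse system of `K`-algebras,
realized as a subalgebra of the product. -/
def limAlg : Subalgebra K (∀ i, A i) where
  carrier := {x | ∀ i, T i (x (i + 1)) = x i}
  mul_mem' {x y} hx hy i := by
    simp only [Pi.mul_apply, map_mul, hx i, hy i]
  add_mem' {x y} hx hy i := by
    simp only [Pi.add_apply, map_add, hx i, hy i]
  algebraMap_mem' r i := by
    simp only [Pi.algebraMap_apply, AlgHom.commutes]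

/-- The commutative ring structure of `limAlg` as a subalgebra (added in the port: instance
search no longer finds `Subalgebra.toCommRing` for it inside the tensor product). -/
noncomputable instance limAlg.instCommRing : CommRing (limAlg K A T) :=
  Subalgebra.toCommRing (limAlg K A T)

/-- The projection from the inverse limit to the `i`-th component. -/
def projA (i : ℕ) : limAlg K A T →ₐ[K] A i :=
  (Pi.evalAlgHom K A i).comp (limAlg K A T).val

/-- The canonical map `(lim_i A i) ⊗_K L → A i ⊗_K L`. -/
noncomputable def tensorProj (i : ℕ) :
    (limAlg K A T) ⊗[K] L →ₐ[K] (A i ⊗[K] L) :=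
  Algebra.TensorProduct.map (projA K A T i) (AlgHom.id K L)

/-- The inverse limit `lim_i (A i ⊗_K L)` of the base-changed system. -/
noncomputable def limTensor : Subalgebra K (∀ i, A i ⊗[K] L) where
  carrier := {x | ∀ i,
    Algebra.TensorProduct.map (T i) (AlgHom.id K L) (x (i + 1)) = x i}
  mul_mem' {x y} hx hy i := by
    simp only [Pi.mul_apply, map_mul, hx i, hy i]
  add_mem' {x y} hx hy i := by
    simp only [Pi.add_apply, map_add, hx i, hy i]
  algebraMap_mem' r i := by
    simp only [Pi.algebraMap_apply, AlgHom.commutes]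

/-- The `i`-th quotient `((lim_j A j) ⊗_K L) / ker(pᵢ)` of the (algebraic) tensor
product, whose inverse limit is the completed tensor product `(lim_i A i) ⊗̂_K L`. -/
noncomputable abbrev BQuot (i : ℕ) : Type u :=
  ((limAlg K A T) ⊗[K] L) ⧸ RingHom.ker (tensorProj K L A T i).toRingHom

/-- The inverse limit of the quotients `BQuot i`, i.e. the completed tensor product
`(lim_i A i) ⊗̂_K L` (the coproduct in the category of topological rings, each quotient
carrying the discrete topology and the limits the inverse-limit topologies). -/
noncomputable def limBQuot (hker : ∀ i,
    RingHom.ker (tensorProj K L A T (i + 1)).toRingHom ≤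
      RingHom.ker (tensorProj K L A T i).toRingHom) :
    Subring (∀ i, BQuot K L A T i) :=
  RingHom.eqLocus (S := ∀ i, BQuot K L A T i)
    (Pi.ringHom fun i => (Ideal.Quotient.factor (hker i)).comp
      (Pi.evalRingHom (fun j => BQuot K L A T j) (i + 1)))
    (RingHom.id _)
/-- Cast along an equality of indices. -/
def recast {m n : ℕ} (h : m = n) (x : A m) : A n := h ▸ x

lemma recast_rfl {m : ℕ} (h : m = m) (x : A m) : recast A h x = x := rfl

lemma recast_recast {m n p : ℕ} (h1 : m = n) (h2 : n = p) (x : A m) :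
    recast A h2 (recast A h1 x) = recast A (h1.trans h2) x := by
  subst h1; subst h2; rfl

lemma recast_T {m n : ℕ} (h : m = n) (h' : m + 1 = n + 1) (x : A (m + 1)) :
    T n (recast A h' x) = recast A h (T m x) := by
  subst h; rfl

/-- The downward chain of transition maps `A (j + k) → A j`. -/
def down (j : ℕ) : ∀ k, A (j + k) →ₐ[K] A j
  | 0 => AlgHom.id K (A j)
  | (k+1) => (down j k).comp (T (j + k))

/-- A choice of sections of the transition maps, iterated upwards from `a : A i`. -/
noncomputable def useq (hsurjT : ∀ i, Function.Surjective (T i)) (i : ℕ) (a : A i) :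
    ∀ k, A (i + k)
  | 0 => a
  | (k+1) => (hsurjT (i + k) (useq hsurjT i a k)).choose

lemma T_useq (hsurjT : ∀ i, Function.Surjective (T i)) (i : ℕ) (a : A i) (k : ℕ) :
    T (i + k) (useq K A T hsurjT i a (k + 1)) = useq K A T hsurjT i a k :=
  (hsurjT (i + k) (useq K A T hsurjT i a k)).choose_spec

lemma down_useq (hsurjT : ∀ i, Function.Surjective (T i)) (i : ℕ) (a : A i) :
    ∀ k, down K A T i k (useq K A T hsurjT i a k) = a
  | 0 => rfl
  | (k+1) => by
      show down K A T i k (T (i + k) (useq K A T hsurjT i a (k+1))) = a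
      rw [T_useq K A T hsurjT i a k]
      exact down_useq hsurjT i a k

lemma T_down (j : ℕ) : ∀ (k : ℕ) (h : (j+1) + k = j + (k+1)) (y : A ((j+1) + k)),
    T j (down K A T (j+1) k y) = down K A T j (k+1) (recast A h y)
  | 0, h, y => by
      show T j y = T (j + 0) (recast A h y)
      rw [recast_rfl A h y]; rfl
  | (k+1), h, y => by
      have h2 : (j+1) + k = j + (k+1) := by omega
      show T j (down K A T (j+1) k (T ((j+1)+k) y)) =
        down K A T j (k+1) (T (j + (k+1)) (recast A h y))
      rw [T_down j k h2 (T ((j+1)+k) y), recast_T K A T h2 h y]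

lemma projA_surjective (hsurjT : ∀ i, Function.Surjective (T i)) (i : ℕ) :
    Function.Surjective (projA K A T i) := by
  intro a
  set u := useq K A T hsurjT i a with hu
  have hmem : (fun j => down K A T j i (recast A (Nat.add_comm i j) (u j))) ∈ limAlg K A T := by
    intro j
    have h1 : (j+1) + i = j + (i+1) := by omega
    show T j (down K A T (j+1) i (recast A (Nat.add_comm i (j+1)) (u (j+1)))) = _
    rw [T_down K A T j i h1 _]
    rw [recast_recast]
    show down K A T j i (T (j + i) (recast A ((Nat.add_comm i (j+1)).trans h1) (u (j+1)))) = _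
    rw [recast_T K A T (Nat.add_comm i j) ((Nat.add_comm i (j+1)).trans h1) (u (j+1))]
    rw [T_useq K A T hsurjT i a j]
  refine ⟨⟨_, hmem⟩, ?_⟩
  show down K A T i i (recast A (Nat.add_comm i i) (u i)) = a
  rw [recast_rfl]
  exact down_useq K A T hsurjT i a i

lemma tensorProj_surjective (hsurjT : ∀ i, Function.Surjective (T i)) (i : ℕ) :
    Function.Surjective (tensorProj K L A T i) := by
  intro z
  induction z using TensorProduct.induction_on with
  | zero => exact ⟨0, map_zero _⟩
  | tmul a l =>
      obtain ⟨x, hx⟩ := projA_surjective K A T hsurjT i a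
      exact ⟨x ⊗ₜ l, by simp [tensorProj, hx]⟩
  | add z w hz hw =>
      obtain ⟨z', hz'⟩ := hz
      obtain ⟨w', hw'⟩ := hw
      exact ⟨z' + w', by rw [map_add, hz', hw']⟩


lemma tensorProj_natural (i : ℕ) (b : (limAlg K A T) ⊗[K] L) :
    Algebra.TensorProduct.map (T i) (AlgHom.id K L) (tensorProj K L A T (i + 1) b) =
      tensorProj K L A T i b := by
  induction b using TensorProduct.induction_on with
  | zero => simp
  | tmul x l =>
      simp only [tensorProj, Algebra.TensorProduct.map_tmul, AlgHom.coe_id, id_eq]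
      congr 1
      exact x.2 i
  | add z w hz hw => rw [map_add, map_add, map_add, hz, hw]


/-- Let `(R_i)` be a surjective inverse system of local `K`-algebras with residue field
`K` and nilpotent maximal ideals (coefficient fields chosen compatibly, i.e. the
`K`-algebra structures), and `K ⊆ L` a field extension. Then: (1) each `R_i ⊗_K L` is a
local ring with nilpotent maximal ideal and residue field `L`; and (2) the natural map
`lim_i (R_i ⊗_K L) ≅ (lim_i R_i) ⊗̂_K L` is an isomorphism of topological rings, where
the completed tensor product is the inverse limit of the quotients of
`(lim_i R_i) ⊗_K L` by the kernels of the canonical maps to `R_i ⊗_K L` (the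
compatibility with all projections expressing that the isomorphism is topological for
the inverse-limit topologies). -/
theorem base_change_of_limit_test_rings
    [∀ i, IsLocalRing (A i)]
    (hsurjT : ∀ i, Function.Surjective (T i))
    (hres : ∀ i, Function.Bijective ((residue (A i)).comp (algebraMap K (A i))))
    (hnil : ∀ i, ∃ m : ℕ, (maximalIdeal (A i)) ^ m = ⊥)
    (hker : ∀ i, RingHom.ker (tensorProj K L A T (i + 1)).toRingHom ≤
      RingHom.ker (tensorProj K L A T i).toRingHom) :
    (∀ i, ∃ h : IsLocalRing (A i ⊗[K] L),
      (∃ m : ℕ, (@IsLocalRing.maximalIdeal _ _ h) ^ m = ⊥) ∧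
      ∃ σ : (A i ⊗[K] L) →+* L, Function.Surjective σ ∧
        RingHom.ker σ = @IsLocalRing.maximalIdeal _ _ h) ∧
    ∃ e : limBQuot K L A T hker ≃+* limTensor K L A T,
      ∀ (x : limBQuot K L A T hker) (i : ℕ),
        (e x : ∀ i, A i ⊗[K] L) i =
          RingHom.kerLift (tensorProj K L A T i).toRingHom ((x : ∀ i, BQuot K L A T i) i) := by
  constructor
  · -- Part 1: each `A i ⊗ L` is local with nilpotent maximal ideal and residue field `L`
    intro i
    set φ := RingEquiv.ofBijective _ (hres i) with hφdef
    have hφapp : ∀ k : K, φ k = residue (A i) (algebraMap K (A i) k) := fun k => rfl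
    let f : A i →ₐ[K] L :=
      { toRingHom := (algebraMap K L).comp ((φ.symm : ResidueField (A i) →+* K).comp
          (residue (A i)))
        commutes' := fun k => by
          show algebraMap K L (φ.symm (residue (A i) (algebraMap K (A i) k))) =
            algebraMap K L k
          rw [← hφapp, φ.symm_apply_apply] }
    have hf : ∀ x : A i, f x = algebraMap K L (φ.symm (residue (A i) x)) := fun _ => rfl
    let σa : (A i ⊗[K] L) →ₐ[K] L := Algebra.TensorProduct.productMap f (AlgHom.id K L)
    have hσtmul : ∀ (x : A i) (l : L), σa (x ⊗ₜ[K] l) = f x * l := fun x l => rfl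
    have hσsurj : Function.Surjective σa := fun l => ⟨1 ⊗ₜ l, by
      rw [hσtmul, map_one, one_mul]⟩
    set M : Ideal (A i ⊗[K] L) :=
      Ideal.map (Algebra.TensorProduct.includeLeft (R := K) (S := K) (A := A i) (B := L))
        (maximalIdeal (A i)) with hMdef
    have hf0 : ∀ x ∈ maximalIdeal (A i), f x = 0 := by
      intro x hx
      rw [hf, (IsLocalRing.residue_eq_zero_iff x).mpr hx, map_zero, map_zero]
    have key : ∀ z : A i ⊗[K] L, z - 1 ⊗ₜ[K] (σa z) ∈ M := by
      intro z
      induction z using TensorProduct.induction_on with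
      | zero => simp
      | tmul x l =>
          set c : A i := algebraMap K (A i) (φ.symm (residue (A i) x)) with hc
          have hmem : x - c ∈ maximalIdeal (A i) := by
            rw [← IsLocalRing.residue_eq_zero_iff, map_sub, hc, ← hφapp,
              φ.apply_symm_apply, sub_self]
          have h1 : (1 : A i) ⊗ₜ[K] (σa (x ⊗ₜ[K] l)) = c ⊗ₜ[K] l := by
            rw [hσtmul, hf, ← Algebra.smul_def, ← TensorProduct.smul_tmul, hc,
              Algebra.smul_def, mul_one]
          rw [h1, ← TensorProduct.sub_tmul]
          have h2 : (x - c) ⊗ₜ[K] l =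
              (Algebra.TensorProduct.includeLeft (R := K) (S := K) (x - c) :
                A i ⊗[K] L) * (1 ⊗ₜ[K] l) := by
            rw [Algebra.TensorProduct.includeLeft_apply,
              Algebra.TensorProduct.tmul_mul_tmul, mul_one, one_mul]
          rw [h2]
          exact Ideal.mul_mem_right _ _ (Ideal.mem_map_of_mem _ hmem)
      | add z w hz hw =>
          rw [map_add, TensorProduct.tmul_add, add_sub_add_comm]
          exact add_mem hz hw
    have hker_eq : RingHom.ker σa = M := by
      apply le_antisymm
      · intro z hz
        have := key z
        rwa [show σa z = 0 from hz, TensorProduct.tmul_zero, sub_zero] at this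
      · rw [Ideal.map_le_iff_le_comap]
        intro x hx
        show σa (x ⊗ₜ[K] 1) = 0
        rw [hσtmul, hf0 x hx, zero_mul]
    obtain ⟨m, hm⟩ := hnil i
    have hMnil : M ^ m = ⊥ := by
      rw [hMdef, ← Ideal.map_pow, hm, Ideal.map_bot]
    haveI hmax : (RingHom.ker σa).IsMaximal :=
      RingHom.ker_isMaximal_of_surjective σa hσsurj
    have hnilrad : nilradical (A i ⊗[K] L) = RingHom.ker σa := by
      apply le_antisymm
      · exact nilradical_le_prime (RingHom.ker σa)
      · intro x hx
        refine ⟨m, ?_⟩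
        have : x ^ m ∈ (RingHom.ker σa : Ideal (A i ⊗[K] L)) ^ m := Ideal.pow_mem_pow hx m
        rwa [hker_eq, hMnil, Ideal.mem_bot] at this
    haveI : (nilradical (A i ⊗[K] L)).IsMaximal := hnilrad ▸ hmax
    haveI hloc : IsLocalRing (A i ⊗[K] L) := IsLocalRing.of_isMaximal_nilradical _
    have hkm : RingHom.ker (σa : (A i ⊗[K] L) →+* L) = maximalIdeal (A i ⊗[K] L) :=
      IsLocalRing.ker_eq_maximalIdeal _ hσsurj
    refine ⟨hloc, ⟨m, ?_⟩, (σa : (A i ⊗[K] L) →+* L), hσsurj, hkm⟩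
    rw [← hkm]
    show (RingHom.ker σa) ^ m = ⊥
    rw [hker_eq]
    exact hMnil
  · -- Part 2: the isomorphism
    let Φ : limBQuot K L A T hker →+* (∀ i, A i ⊗[K] L) :=
      (Pi.ringHom fun i => (RingHom.kerLift (tensorProj K L A T i).toRingHom).comp
        (Pi.evalRingHom (fun j => BQuot K L A T j) i)).comp (limBQuot K L A T hker).subtype
    have hΦ : ∀ (x : limBQuot K L A T hker) (i : ℕ),
        Φ x i = RingHom.kerLift (tensorProj K L A T i).toRingHom
          ((x : ∀ i, BQuot K L A T i) i) := fun x i => rfl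
    have hΦmem : ∀ x : limBQuot K L A T hker, Φ x ∈ limTensor K L A T := by
      intro x i
      have hx : Ideal.Quotient.factor (hker i) ((x : ∀ j, BQuot K L A T j) (i + 1)) =
          (x : ∀ j, BQuot K L A T j) i := congrFun x.2 i
      obtain ⟨b, hb⟩ := Ideal.Quotient.mk_surjective ((x : ∀ j, BQuot K L A T j) (i + 1))
      show Algebra.TensorProduct.map (T i) (AlgHom.id K L) (Φ x (i + 1)) = Φ x i
      rw [hΦ, hΦ, ← hx, ← hb, Ideal.Quotient.factor_mk, RingHom.kerLift_mk,
        RingHom.kerLift_mk]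
      exact tensorProj_natural K L A T i b
    let Ψ : limBQuot K L A T hker →+* limTensor K L A T :=
      Φ.codRestrict (limTensor K L A T).toSubring hΦmem
    have hΨbij : Function.Bijective Ψ := by
      constructor
      · intro x y hxy
        apply Subtype.ext
        funext i
        apply RingHom.kerLift_injective (tensorProj K L A T i).toRingHom
        have := congrArg (fun z : limTensor K L A T => (z : ∀ j, A j ⊗[K] L) i) hxy
        simpa [Ψ, hΦ] using this
      · rintro ⟨y, hy⟩
        have hy' : ∀ i, Algebra.TensorProduct.map (T i) (AlgHom.id K L) (y (i + 1)) = y i := hy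
        choose b hb using fun i => tensorProj_surjective K L A T hsurjT i (y i)
        have hbmem : (fun i => Ideal.Quotient.mk
            (RingHom.ker (tensorProj K L A T i).toRingHom) (b i)) ∈ limBQuot K L A T hker := by
          show Pi.ringHom _ _ = RingHom.id _ _
          funext i
          show Ideal.Quotient.factor (hker i) (Ideal.Quotient.mk _ (b (i + 1))) =
            Ideal.Quotient.mk _ (b i)
          rw [Ideal.Quotient.factor_mk, Ideal.Quotient.mk_eq_mk_iff_sub_mem]
          show tensorProj K L A T i (b (i + 1) - b i) = 0
          rw [map_sub, ← tensorProj_natural K L A T i (b (i + 1)), hb (i + 1), hb i,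
            hy' i, sub_self]
        refine ⟨⟨_, hbmem⟩, ?_⟩
        apply Subtype.ext
        funext i
        show RingHom.kerLift (tensorProj K L A T i).toRingHom
          (Ideal.Quotient.mk _ (b i)) = y i
        rw [RingHom.kerLift_mk]
        exact hb i
    exact ⟨RingEquiv.ofBijective Ψ hΨbij, fun x i => rfl⟩

end
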